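/- Let n ≥ 1, let h be a Hermitian matrix in Matrix (Fin n) (Fin n) ℂ, and let P be a Hermitian idempotent matrix with h·P = P·h. Suppose there are real numbers a < b with gap g = b - a > 0 such that ⟨x, h x⟩ ≤ a·‖x‖² for every x in the range of P and ⟨x, h x⟩ ≥ b·‖x‖² for every x in the kernel of P. Then for every matrix A that is off-diagonal with respect to P there exists a unique matrix B that is off-diagonal with respect to P and satisfies h·B - B·h = A; moreover ‖B‖ ≤ ‖A‖/g in the ℓ²-operator norm. -/

import Mathlib

open Matrix MeasureTheory Set
open scoped Matrix.Norms.L2Operator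

lemma aux_norm_diagonal_le {n : ℕ} (v : Fin n → ℂ) {C : ℝ} (hC : 0 ≤ C)
    (hv : ∀ i, ‖v i‖ ≤ C) : ‖diagonal v‖ ≤ C := by
  rw [Matrix.l2_opNorm_def]
  refine ContinuousLinearMap.opNorm_le_bound _ hC fun x => ?_
  rw [EuclideanSpace.norm_eq, EuclideanSpace.norm_eq]
  have key := Real.sqrt_le_sqrt (Finset.sum_le_sum (f := fun i : Fin n =>
      ‖((LinearEquiv.trans Matrix.toEuclideanLin LinearMap.toContinuousLinearMap
        (diagonal v)) x) i‖ ^ 2) (g := fun i => C ^ 2 * ‖x i‖ ^ 2) (s := Finset.univ)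
    (fun i _ => by
      simp only [LinearEquiv.trans_apply, LinearMap.coe_toContinuousLinearMap',
        Matrix.toEuclideanLin_apply, PiLp.toLp_apply, mulVec_diagonal,
        norm_mul, mul_pow]
      exact mul_le_mul_of_nonneg_right (pow_le_pow_left₀ (norm_nonneg _) (hv i) 2)
        (sq_nonneg _)))
  refine key.trans ?_
  rw [← Finset.mul_sum, Real.sqrt_mul (sq_nonneg C), Real.sqrt_sq hC]

lemma aux_norm_one_le {n : ℕ} : ‖(1 : Matrix (Fin n) (Fin n) ℂ)‖ ≤ 1 := by
  rw [← Matrix.diagonal_one]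
  exact aux_norm_diagonal_le _ zero_le_one (fun i => by simp)

lemma aux_norm_unitary {n : ℕ} (U : Matrix (Fin n) (Fin n) ℂ) (hU : Uᴴ * U = 1) :
    ‖U‖ ≤ 1 := by
  have h1 := Matrix.l2_opNorm_conjTranspose_mul_self U
  rw [hU] at h1
  nlinarith [norm_nonneg U, aux_norm_one_le (n := n), norm_nonneg (1 : Matrix (Fin n) (Fin n) ℂ)]

lemma aux_norm_conj_le {n : ℕ} (U V M : Matrix (Fin n) (Fin n) ℂ)
    (hU : ‖U‖ ≤ 1) (hV : ‖V‖ ≤ 1) : ‖U * M * V‖ ≤ ‖M‖ := by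
  have h1 : ‖U * M‖ ≤ ‖M‖ := by
    have := Matrix.l2_opNorm_mul U M
    have h2 : ‖U‖ * ‖M‖ ≤ ‖M‖ := mul_le_of_le_one_left (norm_nonneg M) hU
    linarith
  have h3 : ‖U * M * V‖ ≤ ‖U * M‖ * ‖V‖ := Matrix.l2_opNorm_mul _ _
  have h4 : ‖U * M‖ * ‖V‖ ≤ ‖U * M‖ := mul_le_of_le_one_right (norm_nonneg _) hV
  linarith


noncomputable def entryCLM {n : ℕ} (i j : Fin n) :
    Matrix (Fin n) (Fin n) ℂ →L[ℝ] ℂ :=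
  LinearMap.toContinuousLinearMap
    { toFun := fun M => M i j
      map_add' := fun _ _ => rfl
      map_smul' := fun _ _ => rfl }

lemma aux_integral_entry {n : ℕ} (i j : Fin n) (f : ℝ → Matrix (Fin n) (Fin n) ℂ)
    (hf : IntegrableOn f (Ioi 0) volume) :
    (∫ t in Ioi (0:ℝ), f t) i j = ∫ t in Ioi (0:ℝ), f t i j := by
  have := (ContinuousLinearMap.integral_comp_comm (entryCLM i j) hf).symm
  exact this

lemma aux_exp_integral {g : ℝ} (hg : 0 < g) :
    ∫ t in Ioi (0:ℝ), Real.exp (-(g * t)) = g⁻¹ := by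
  have := integral_comp_mul_left_Ioi (fun x => Real.exp (-x)) 0 hg
  simp only [mul_zero] at this
  simp only [this, integral_exp_neg_Ioi, neg_zero, Real.exp_zero, smul_eq_mul, mul_one]

lemma aux_integral_ofReal (r : ℝ → ℝ) :
    ∫ t in Ioi (0:ℝ), ((r t : ℝ) : ℂ) = ((∫ t in Ioi (0:ℝ), r t : ℝ) : ℂ) :=
  integral_ofReal

lemma aux_exp_integrable {g : ℝ} (hg : 0 < g) :
    IntegrableOn (fun t => Real.exp (-(g * t))) (Ioi (0:ℝ)) := by
  simpa [neg_mul] using exp_neg_integrableOn_Ioi 0 hg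

lemma aux_schur {n : ℕ} (d : Fin n → ℝ) (a b : ℝ) (hab : a < b)
    (hd : ∀ i, d i ≤ a ∨ b ≤ d i) (A : Matrix (Fin n) (Fin n) ℂ)
    (hA : ∀ i j, ((d i ≤ a) ↔ (d j ≤ a)) → A i j = 0) :
    ‖(Matrix.of fun i j => A i j / ((d i : ℂ) - (d j : ℂ)))‖ ≤ ‖A‖ / (b - a) := by
  classical
  set g : ℝ := b - a with hgdef
  have hg : 0 < g := sub_pos.mpr hab
  set c : ℝ := (a + b) / 2 with hcdef
  have hlow : ∀ i, d i ≤ a → d i - c ≤ -(g/2) := fun i hi => by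
    rw [hcdef, hgdef]; linarith
  have hhigh : ∀ i, ¬(d i ≤ a) → g/2 ≤ d i - c := fun i hi => by
    rcases hd i with h | h
    · exact absurd h hi
    · rw [hcdef, hgdef]; linarith
  set sp : ℝ → Fin n → ℂ := fun t i =>
    if d i ≤ a then ((Real.exp (t * (d i - c)) : ℝ) : ℂ)
    else ((Real.exp (-(t * (d i - c))) : ℝ) : ℂ) with hspdef
  set sm : ℝ → Fin n → ℂ := fun t i =>
    if d i ≤ a then -((Real.exp (t * (d i - c)) : ℝ) : ℂ)
    else ((Real.exp (-(t * (d i - c))) : ℝ) : ℂ) with hsmdef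
  set f : ℝ → Matrix (Fin n) (Fin n) ℂ :=
    fun t => diagonal (sm t) * (A * diagonal (sp t)) with hfdef
  have hentry : ∀ t i j, f t i j = sm t i * (A i j * sp t j) := by
    intro t i j
    rw [hfdef]
    simp only [diagonal_mul, mul_diagonal]
  have hsp_norm : ∀ t : ℝ, 0 ≤ t → ∀ i, ‖sp t i‖ ≤ Real.exp (-(g/2) * t) := by
    intro t ht i
    rw [hspdef]
    by_cases hi : d i ≤ a
    · simp only [hi, if_true, Complex.norm_real, Real.norm_eq_abs, Real.abs_exp]
      apply Real.exp_le_exp.mpr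
      have := mul_le_mul_of_nonneg_left (hlow i hi) ht
      nlinarith
    · simp only [hi, if_false, Complex.norm_real, Real.norm_eq_abs, Real.abs_exp]
      apply Real.exp_le_exp.mpr
      have := mul_le_mul_of_nonneg_left (hhigh i hi) ht
      nlinarith
  have hsm_norm : ∀ t : ℝ, 0 ≤ t → ∀ i, ‖sm t i‖ ≤ Real.exp (-(g/2) * t) := by
    intro t ht i
    have h1 : ‖sm t i‖ = ‖sp t i‖ := by
      rw [hsmdef, hspdef]
      by_cases hi : d i ≤ a <;> simp [hi]
    rw [h1]; exact hsp_norm t ht i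
  have hfnorm : ∀ t : ℝ, 0 ≤ t → ‖f t‖ ≤ ‖A‖ * Real.exp (-(g * t)) := by
    intro t ht
    have h1 : ‖diagonal (sm t)‖ ≤ Real.exp (-(g/2) * t) :=
      aux_norm_diagonal_le _ (Real.exp_pos _).le (hsm_norm t ht)
    have h2 : ‖diagonal (sp t)‖ ≤ Real.exp (-(g/2) * t) :=
      aux_norm_diagonal_le _ (Real.exp_pos _).le (hsp_norm t ht)
    calc ‖f t‖ ≤ ‖diagonal (sm t)‖ * ‖A * diagonal (sp t)‖ := Matrix.l2_opNorm_mul _ _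
      _ ≤ Real.exp (-(g/2) * t) * (‖A‖ * Real.exp (-(g/2) * t)) := by
          refine mul_le_mul h1 ?_ (norm_nonneg _) (Real.exp_pos _).le
          exact le_trans (Matrix.l2_opNorm_mul _ _)
            (mul_le_mul_of_nonneg_left h2 (norm_nonneg _))
      _ = ‖A‖ * (Real.exp (-(g/2) * t) * Real.exp (-(g/2) * t)) := by ring
      _ = ‖A‖ * Real.exp (-(g * t)) := by rw [← Real.exp_add]; ring_nf
  have hcont : Continuous f := by
    have hdiag : ∀ s : ℝ → Fin n → ℂ, (∀ i, Continuous fun t => s t i) →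
        Continuous fun t => diagonal (s t) := by
      intro s hs
      apply continuous_matrix
      intro i j
      by_cases hij : i = j
      · subst hij; simpa [diagonal_apply_eq] using hs i
      · simpa [diagonal_apply_ne _ hij] using continuous_const
    have hspc : ∀ i, Continuous fun t => sp t i := by
      intro i
      rw [hspdef]
      by_cases hi : d i ≤ a <;> simp only [hi, if_true, if_false] <;>
        exact Complex.continuous_ofReal.comp (Real.continuous_exp.comp (by fun_prop))
    have hsmc : ∀ i, Continuous fun t => sm t i := by
      intro i
      rw [hsmdef]
      by_cases hi : d i ≤ a <;> simp only [hi, if_true, if_false]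
      · exact (Complex.continuous_ofReal.comp (Real.continuous_exp.comp (by fun_prop))).neg
      · exact Complex.continuous_ofReal.comp (Real.continuous_exp.comp (by fun_prop))
    rw [hfdef]
    exact (hdiag _ hsmc).mul (continuous_const.mul (hdiag _ hspc))
  have hbound_int : IntegrableOn (fun t => ‖A‖ * Real.exp (-(g * t))) (Ioi (0:ℝ)) :=
    (aux_exp_integrable hg).const_mul ‖A‖
  have hfint : IntegrableOn f (Ioi (0:ℝ)) := by
    refine Integrable.mono' hbound_int hcont.aestronglyMeasurable.restrict ?_
    filter_upwards [ae_restrict_mem measurableSet_Ioi] with t ht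
    exact hfnorm t ht.le
  have hBm : (Matrix.of fun i j => A i j / ((d i : ℂ) - (d j : ℂ)))
      = ∫ t in Ioi (0:ℝ), f t := by
    ext i j
    rw [aux_integral_entry i j f hfint, of_apply]
    by_cases hi : d i ≤ a <;> by_cases hj : d j ≤ a
    · have hz : A i j = 0 := hA i j (by tauto)
      simp only [hz, zero_div]
      have : ∀ t : ℝ, f t i j = 0 := by intro t; rw [hentry, hz]; ring
      simp only [this, integral_zero]
    · -- i low, j high
      have hij : d i ≠ d j := by
        rcases hd j with h | h
        · exact absurd h hj
        · intro he; rw [he] at hi; linarith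
      have hk : 0 < d j - d i := by
        rcases hd j with h | h
        · exact absurd h hj
        · linarith
      have hz : ∀ t : ℝ, f t i j = (-(A i j)) • ((Real.exp (-((d j - d i) * t)) : ℝ) : ℂ) := by
        intro t
        rw [smul_eq_mul, hentry, hspdef, hsmdef]
        simp only [hi, hj, if_true, if_false]
        have he : Real.exp (t * (d i - c)) * Real.exp (-(t * (d j - c)))
            = Real.exp (-((d j - d i) * t)) := by rw [← Real.exp_add]; ring_nf
        rw [← he]
        push_cast
        ring
      simp_rw [hz]
      rw [integral_smul, aux_integral_ofReal, aux_exp_integral hk, smul_eq_mul]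
      have h1 : ((d i : ℂ)) - (d j : ℂ) ≠ 0 := sub_ne_zero.mpr (by exact_mod_cast hij)
      have h2 : ((d j : ℂ)) - (d i : ℂ) ≠ 0 := sub_ne_zero.mpr (by exact_mod_cast hij.symm)
      push_cast
      field_simp
      ring
    · -- i high, j low
      have hij : d i ≠ d j := by
        rcases hd i with h | h
        · exact absurd h hi
        · intro he; rw [← he] at hj; linarith
      have hk : 0 < d i - d j := by
        rcases hd i with h | h
        · exact absurd h hi
        · linarith
      have hz : ∀ t : ℝ, f t i j = (A i j) • ((Real.exp (-((d i - d j) * t)) : ℝ) : ℂ) := by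
        intro t
        rw [smul_eq_mul, hentry, hspdef, hsmdef]
        simp only [hi, hj, if_true, if_false]
        have he : Real.exp (-(t * (d i - c))) * Real.exp (t * (d j - c))
            = Real.exp (-((d i - d j) * t)) := by rw [← Real.exp_add]; ring_nf
        rw [← he]
        push_cast
        ring
      simp_rw [hz]
      rw [integral_smul, aux_integral_ofReal, aux_exp_integral hk, smul_eq_mul]
      have h1 : ((d i : ℂ)) - (d j : ℂ) ≠ 0 := sub_ne_zero.mpr (by exact_mod_cast hij)
      push_cast
      field_simp
    · have hz : A i j = 0 := hA i j (by tauto)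
      simp only [hz, zero_div]
      have : ∀ t : ℝ, f t i j = 0 := by intro t; rw [hentry, hz]; ring
      simp only [this, integral_zero]
  rw [hBm]
  calc ‖∫ t in Ioi (0:ℝ), f t‖ ≤ ∫ t in Ioi (0:ℝ), ‖f t‖ := norm_integral_le_integral_norm _
    _ ≤ ∫ t in Ioi (0:ℝ), ‖A‖ * Real.exp (-(g * t)) := by
        refine setIntegral_mono_on hfint.norm hbound_int measurableSet_Ioi fun t ht => ?_
        exact hfnorm t (le_of_lt ht)
    _ = ‖A‖ * ∫ t in Ioi (0:ℝ), Real.exp (-(g * t)) := by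
        simp_rw [← smul_eq_mul, integral_smul]
    _ = ‖A‖ * g⁻¹ := by rw [aux_exp_integral hg]
    _ = ‖A‖ / g := (div_eq_mul_inv _ _).symm

lemma aux_mulVec_single {n : ℕ} (M : Matrix (Fin n) (Fin n) ℂ) (i j : Fin n) :
    (M *ᵥ Pi.single i 1) j = M j i := by
  simp [Matrix.mulVec, dotProduct, Pi.single_apply]

lemma aux_re_nonneg {n : ℕ} (y : Fin n → ℂ) : 0 ≤ (star y ⬝ᵥ y).re := by
  rw [dotProduct, Complex.re_sum]
  apply Finset.sum_nonneg
  intro j _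
  simp only [Pi.star_apply, Complex.star_def, Complex.mul_re, Complex.conj_re, Complex.conj_im]
  nlinarith [sq_nonneg (y j).re, sq_nonneg (y j).im]

lemma aux_re_zero {n : ℕ} (y : Fin n → ℂ) (hy : (star y ⬝ᵥ y).re = 0) : y = 0 := by
  rw [dotProduct, Complex.re_sum] at hy
  have hnn : ∀ j ∈ Finset.univ, 0 ≤ ((star y j) * y j).re := by
    intro j _
    simp only [Pi.star_apply, Complex.star_def, Complex.mul_re, Complex.conj_re, Complex.conj_im]
    nlinarith [sq_nonneg (y j).re, sq_nonneg (y j).im]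
  have h0 := (Finset.sum_eq_zero_iff_of_nonneg hnn).mp hy
  funext j
  have hj := h0 j (Finset.mem_univ j)
  simp only [Pi.star_apply, Complex.star_def, Complex.mul_re, Complex.conj_re,
    Complex.conj_im] at hj
  have h1 : (y j).re = 0 := by nlinarith [sq_nonneg (y j).re, sq_nonneg (y j).im]
  have h2 : (y j).im = 0 := by nlinarith [sq_nonneg (y j).re, sq_nonneg (y j).im]
  simp [Complex.ext_iff, h1, h2]

lemma aux_quad {n : ℕ} (r : ℝ) (y : Fin n → ℂ) :
    (star y ⬝ᵥ ((r : ℂ) • y)).re = r * (star y ⬝ᵥ y).re := by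
  rw [dotProduct_smul, smul_eq_mul]
  simp [Complex.mul_re]

lemma aux_diag_sandwich {n : ℕ} (v w : Fin n → ℂ) (M : Matrix (Fin n) (Fin n) ℂ)
    (i j : Fin n) : (diagonal v * M * diagonal w) i j = v i * M i j * w j := by
  rw [Matrix.mul_assoc, Matrix.diagonal_mul, Matrix.mul_diagonal, mul_assoc]

lemma aux_one_sub_diag {n : ℕ} (v : Fin n → ℂ) :
    (1 : Matrix (Fin n) (Fin n) ℂ) - diagonal v = diagonal (fun i => 1 - v i) := by
  apply Matrix.ext
  intro i j
  by_cases hij : i = j <;>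
    simp [hij, Matrix.sub_apply, Matrix.diagonal_apply, Matrix.one_apply]

/-- Bounded invertibility of the Liouvillian `L_h(X) = h·X - X·h` on operators that are
off-diagonal with respect to a spectral projector `P` of `h` with spectral gap `g = b - a`,
with the partial inverse bounded in ℓ²-operator norm by `1/g`. -/
theorem stmt_3 (n : ℕ) (hn : 1 ≤ n) (h P : Matrix (Fin n) (Fin n) ℂ)
    (hh : h.IsHermitian) (hPherm : P.IsHermitian) (hPidem : P * P = P)
    (hcomm : h * P = P * h) (a b : ℝ) (hab : a < b)
    (hrange : ∀ x : Fin n → ℂ, P *ᵥ x = x →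
      (star x ⬝ᵥ (h *ᵥ x)).re ≤ a * (star x ⬝ᵥ x).re)
    (hker : ∀ x : Fin n → ℂ, P *ᵥ x = 0 →
      b * (star x ⬝ᵥ x).re ≤ (star x ⬝ᵥ (h *ᵥ x)).re) :
    ∀ A : Matrix (Fin n) (Fin n) ℂ,
      P * A * P = 0 → (1 - P) * A * (1 - P) = 0 →
      ∃ B : Matrix (Fin n) (Fin n) ℂ,
        (P * B * P = 0 ∧ (1 - P) * B * (1 - P) = 0 ∧ h * B - B * h = A ∧
          ‖B‖ ≤ ‖A‖ / (b - a)) ∧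
        ∀ B' : Matrix (Fin n) (Fin n) ℂ,
          P * B' * P = 0 → (1 - P) * B' * (1 - P) = 0 → h * B' - B' * h = A → B' = B := by
  classical
  intro A hA1 hA2
  set U : Matrix (Fin n) (Fin n) ℂ := (hh.eigenvectorUnitary : Matrix (Fin n) (Fin n) ℂ)
    with hUdef
  have hU1 : Uᴴ * U = 1 := by
    have hmem := hh.eigenvectorUnitary.2
    have := Matrix.mem_unitaryGroup_iff'.mp hmem
    simpa [hUdef, Matrix.star_eq_conjTranspose] using this
  have hU2 : U * Uᴴ = 1 := by
    have hmem := hh.eigenvectorUnitary.2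
    have := Matrix.mem_unitaryGroup_iff.mp hmem
    simpa [hUdef, Matrix.star_eq_conjTranspose] using this
  set d : Fin n → ℝ := hh.eigenvalues with hddef
  set D : Matrix (Fin n) (Fin n) ℂ := Matrix.diagonal (fun i => (d i : ℂ)) with hDdef
  have hspec : h = U * D * Uᴴ := by
    calc h = U * Matrix.diagonal (RCLike.ofReal ∘ hh.eigenvalues) * star U :=
          hh.spectral_theorem
      _ = U * D * Uᴴ := rfl
  -- basic conjugation identities
  have hTmul : ∀ M N : Matrix (Fin n) (Fin n) ℂ,
      (Uᴴ * M * U) * (Uᴴ * N * U) = Uᴴ * (M * N) * U := by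
    intro M N
    have e : (Uᴴ * M * U) * (Uᴴ * N * U) = Uᴴ * (M * ((U * Uᴴ) * N)) * U := by
      simp only [Matrix.mul_assoc]
    rw [e, hU2, Matrix.one_mul]
  have hTmul' : ∀ M N : Matrix (Fin n) (Fin n) ℂ,
      (U * M * Uᴴ) * (U * N * Uᴴ) = U * (M * N) * Uᴴ := by
    intro M N
    have e : (U * M * Uᴴ) * (U * N * Uᴴ) = U * (M * ((Uᴴ * U) * N)) * Uᴴ := by
      simp only [Matrix.mul_assoc]
    rw [e, hU1, Matrix.one_mul]
  have hback : ∀ M : Matrix (Fin n) (Fin n) ℂ, U * (Uᴴ * M * U) * Uᴴ = M := by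
    intro M
    have e : U * (Uᴴ * M * U) * Uᴴ = (U * Uᴴ) * M * (U * Uᴴ) := by
      simp only [Matrix.mul_assoc]
    rw [e, hU2, Matrix.one_mul, Matrix.mul_one]
  have hDT : Uᴴ * h * U = D := by
    rw [hspec]
    have e : Uᴴ * (U * D * Uᴴ) * U = (Uᴴ * U) * D * (Uᴴ * U) := by
      simp only [Matrix.mul_assoc]
    rw [e, hU1, Matrix.one_mul, Matrix.mul_one]
  set P' : Matrix (Fin n) (Fin n) ℂ := Uᴴ * P * U with hP'def
  have hP'idem : P' * P' = P' := by rw [hP'def, hTmul, hPidem]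
  have hP'comm : D * P' = P' * D := by
    rw [← hDT, hP'def, hTmul, hTmul, hcomm]
  -- quadratic form transfer
  have hdot : ∀ (M : Matrix (Fin n) (Fin n) ℂ) (x : Fin n → ℂ),
      star x ⬝ᵥ ((Uᴴ * M * U) *ᵥ x) = star (U *ᵥ x) ⬝ᵥ (M *ᵥ (U *ᵥ x)) := by
    intro M x
    rw [Matrix.mulVec_mulVec, Matrix.star_mulVec, ← Matrix.dotProduct_mulVec,
      Matrix.mulVec_mulVec, ← Matrix.mul_assoc]
  have hnormt : ∀ x : Fin n → ℂ, star x ⬝ᵥ x = star (U *ᵥ x) ⬝ᵥ (U *ᵥ x) := by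
    intro x
    have e := hdot 1 x
    rw [Matrix.mul_one, hU1, Matrix.one_mulVec, Matrix.one_mulVec] at e
    exact e
  have hUPcol : U * P' = P * U := by
    have e2 : U * (Uᴴ * P * U) = (U * Uᴴ) * P * U := by simp only [Matrix.mul_assoc]
    rw [hP'def, e2, hU2, Matrix.one_mul]
  have hrange' : ∀ x : Fin n → ℂ, P' *ᵥ x = x →
      (star x ⬝ᵥ (D *ᵥ x)).re ≤ a * (star x ⬝ᵥ x).re := by
    intro x hx
    have hPx : P *ᵥ (U *ᵥ x) = U *ᵥ x := by
      calc P *ᵥ (U *ᵥ x) = (P * U) *ᵥ x := Matrix.mulVec_mulVec x P U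
        _ = (U * P') *ᵥ x := by rw [hUPcol]
        _ = U *ᵥ (P' *ᵥ x) := (Matrix.mulVec_mulVec x U P').symm
        _ = U *ᵥ x := by rw [hx]
    have h1 := hrange (U *ᵥ x) hPx
    rw [← hDT, hdot, hnormt]
    exact h1
  have hker' : ∀ x : Fin n → ℂ, P' *ᵥ x = 0 →
      b * (star x ⬝ᵥ x).re ≤ (star x ⬝ᵥ (D *ᵥ x)).re := by
    intro x hx
    have hPx : P *ᵥ (U *ᵥ x) = 0 := by
      calc P *ᵥ (U *ᵥ x) = (P * U) *ᵥ x := Matrix.mulVec_mulVec x P U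
        _ = (U * P') *ᵥ x := by rw [hUPcol]
        _ = U *ᵥ (P' *ᵥ x) := (Matrix.mulVec_mulVec x U P').symm
        _ = 0 := by rw [hx, Matrix.mulVec_zero]
    have h1 := hker (U *ᵥ x) hPx
    rw [← hDT, hdot, hnormt]
    exact h1
  -- entrywise commutation
  have hcomm_entry : ∀ i j : Fin n, d i ≠ d j → P' i j = 0 := by
    intro i j hij
    have e := congrFun (congrFun hP'comm i) j
    rw [hDdef] at e
    rw [Matrix.diagonal_mul, Matrix.mul_diagonal] at e
    have hne : ((d i : ℂ)) - (d j : ℂ) ≠ 0 :=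
      sub_ne_zero.mpr (by exact_mod_cast hij)
    have h0 : ((d i : ℂ) - (d j : ℂ)) * P' i j = 0 := by linear_combination e
    exact (mul_eq_zero.mp h0).resolve_left hne
  have hDcol : ∀ (i : Fin n) (y : Fin n → ℂ), (∀ j, y j ≠ 0 → d j = d i) →
      D *ᵥ y = ((d i : ℂ)) • y := by
    intro i y hy
    funext j
    rw [hDdef, Matrix.mulVec_diagonal]
    by_cases hz : y j = 0
    · simp [hz]
    · rw [hy j hz, Pi.smul_apply, smul_eq_mul]
  -- classification of indices
  have key : ∀ i : Fin n, (d i ≤ a ∧ P' *ᵥ Pi.single i 1 = Pi.single i 1) ∨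
      (¬ (d i ≤ a) ∧ b ≤ d i ∧ P' *ᵥ Pi.single i 1 = 0) := by
    intro i
    by_cases hi : d i ≤ a
    · left
      refine ⟨hi, ?_⟩
      set y : Fin n → ℂ := Pi.single i 1 - P' *ᵥ Pi.single i 1 with hydef
      have hsupp : ∀ j, y j ≠ 0 → d j = d i := by
        intro j hj
        by_contra hne
        apply hj
        have hji : j ≠ i := fun hji => hne (by rw [hji])
        rw [hydef]
        simp only [Pi.sub_apply]
        rw [aux_mulVec_single, hcomm_entry j i hne, Pi.single_apply, if_neg hji, sub_zero]
      have hkery : P' *ᵥ y = 0 := by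
        rw [hydef, Matrix.mulVec_sub, Matrix.mulVec_mulVec, hP'idem, sub_self]
      have h1 := hker' y hkery
      rw [hDcol i y hsupp, aux_quad] at h1
      have hs := aux_re_nonneg y
      have h2 : (star y ⬝ᵥ y).re = 0 := by nlinarith
      have h3 := aux_re_zero y h2
      rw [hydef] at h3
      exact (sub_eq_zero.mp h3).symm
    · have hcol0 : P' *ᵥ Pi.single i 1 = 0 := by
        set x : Fin n → ℂ := P' *ᵥ Pi.single i 1 with hxdef
        have hsupp : ∀ j, x j ≠ 0 → d j = d i := by
          intro j hj
          by_contra hne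
          apply hj
          rw [hxdef, aux_mulVec_single]
          exact hcomm_entry j i hne
        have hfix : P' *ᵥ x = x := by
          rw [hxdef, Matrix.mulVec_mulVec, hP'idem]
        have h1 := hrange' x hfix
        rw [hDcol i x hsupp, aux_quad] at h1
        have hs := aux_re_nonneg x
        have hlt : a < d i := lt_of_not_ge hi
        have h2 : (star x ⬝ᵥ x).re = 0 := by nlinarith
        exact aux_re_zero x h2
      right
      refine ⟨hi, ?_, hcol0⟩
      have h1 := hker' (Pi.single i 1) hcol0
      have hD1 : D *ᵥ Pi.single i 1 = ((d i : ℂ)) • (Pi.single i 1 : Fin n → ℂ) := by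
        apply hDcol
        intro j hj
        by_contra hne
        apply hj
        rw [Pi.single_apply, if_neg (fun hji => hne (by rw [hji]))]
      rw [hD1, aux_quad] at h1
      have hone : (star (Pi.single i (1:ℂ)) ⬝ᵥ Pi.single i 1).re = 1 := by
        simp [dotProduct, Pi.single_apply, apply_ite]
      rw [hone] at h1
      linarith
  have hdclass : ∀ i, d i ≤ a ∨ b ≤ d i := by
    intro i
    rcases key i with ⟨hi, _⟩ | ⟨_, hb, _⟩
    · exact Or.inl hi
    · exact Or.inr hb
  -- P' is diagonal
  have hP'diag : P' = Matrix.diagonal (fun i => if d i ≤ a then (1:ℂ) else 0) := by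
    apply Matrix.ext
    intro j i
    have hcol : P' j i = (P' *ᵥ Pi.single i 1) j := (aux_mulVec_single P' i j).symm
    rw [hcol, Matrix.diagonal_apply]
    rcases key i with ⟨hi, hc⟩ | ⟨hi, _, hc⟩
    · rw [hc, Pi.single_apply]
      by_cases hji : j = i
      · subst hji; simp [hi]
      · simp [hji]
    · rw [hc]
      by_cases hji : j = i
      · subst hji; simp [hi]
      · simp [hji]
  set A' : Matrix (Fin n) (Fin n) ℂ := Uᴴ * A * U with hA'def
  have hA1' : P' * A' * P' = 0 := by
    rw [hP'def, hA'def, hTmul, hTmul, hA1, Matrix.mul_zero, Matrix.zero_mul]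
  have hQ'T : Uᴴ * (1 - P) * U = 1 - P' := by
    rw [Matrix.mul_sub, Matrix.sub_mul, Matrix.mul_one, hU1, hP'def]
  have hA2' : (1 - P') * A' * (1 - P') = 0 := by
    rw [← hQ'T, hA'def, hTmul, hTmul, hA2, Matrix.mul_zero, Matrix.zero_mul]
  have hA'offd : ∀ i j : Fin n, ((d i ≤ a) ↔ (d j ≤ a)) → A' i j = 0 := by
    intro i j hij
    by_cases hi : d i ≤ a
    · have hj : d j ≤ a := hij.mp hi
      have e := congrFun (congrFun hA1' i) j
      rw [hP'diag, aux_diag_sandwich] at e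
      simp only [hi, hj, if_true, one_mul, mul_one] at e
      simpa using e
    · have hj : ¬ d j ≤ a := fun hja => hi (hij.mpr hja)
      have e := congrFun (congrFun hA2' i) j
      rw [hP'diag, aux_one_sub_diag, aux_diag_sandwich] at e
      simp only [hi, hj, if_false, sub_zero, one_mul, mul_one] at e
      simpa using e
  -- definition of B
  set Bm : Matrix (Fin n) (Fin n) ℂ :=
    Matrix.of (fun i j => A' i j / ((d i : ℂ) - (d j : ℂ))) with hBmdef
  have hBm_entry : ∀ i j, Bm i j = A' i j / ((d i : ℂ) - (d j : ℂ)) := fun i j => rfl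
  have hBm_offd : ∀ i j : Fin n, ((d i ≤ a) ↔ (d j ≤ a)) → Bm i j = 0 := by
    intro i j hij
    rw [hBm_entry, hA'offd i j hij, zero_div]
  set B : Matrix (Fin n) (Fin n) ℂ := U * Bm * Uᴴ with hBdef
  have hPB : P = U * P' * Uᴴ := (hback P).symm
  have hAB : A = U * A' * Uᴴ := (hback A).symm
  have hmatPP : ∀ M : Matrix (Fin n) (Fin n) ℂ, (∀ i j, ((d i ≤ a) ↔ (d j ≤ a)) → M i j = 0) →
      P' * M * P' = 0 ∧ (1 - P') * M * (1 - P') = 0 := by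
    intro M hM
    constructor
    · rw [hP'diag]
      apply Matrix.ext
      intro i j
      rw [aux_diag_sandwich]
      rw [show ((0 : Matrix (Fin n) (Fin n) ℂ)) i j = 0 from rfl]
      by_cases hi : d i ≤ a <;> by_cases hj : d j ≤ a
      · simp [hi, hj, hM i j (iff_of_true hi hj)]
      · simp [hi, hj]
      · simp [hi, hj]
      · simp [hi, hj, hM i j (iff_of_false hi hj)]
    · rw [hP'diag, aux_one_sub_diag]
      apply Matrix.ext
      intro i j
      rw [aux_diag_sandwich]
      rw [show ((0 : Matrix (Fin n) (Fin n) ℂ)) i j = 0 from rfl]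
      by_cases hi : d i ≤ a <;> by_cases hj : d j ≤ a
      · simp [hi, hj, hM i j (iff_of_true hi hj)]
      · simp [hi, hj]
      · simp [hi, hj]
      · simp [hi, hj, hM i j (iff_of_false hi hj)]
  obtain ⟨hBm1, hBm2⟩ := hmatPP Bm hBm_offd
  have hDBm : D * Bm - Bm * D = A' := by
    apply Matrix.ext
    intro i j
    rw [Matrix.sub_apply, hDdef, Matrix.diagonal_mul, Matrix.mul_diagonal, hBm_entry]
    by_cases hde : d i = d j
    · have hcl : (d i ≤ a) ↔ (d j ≤ a) := by rw [hde]
      rw [hA'offd i j hcl, hde]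
      ring
    · have hne : ((d i : ℂ)) - (d j : ℂ) ≠ 0 := sub_ne_zero.mpr (by exact_mod_cast hde)
      field_simp
  refine ⟨B, ⟨?_, ?_, ?_, ?_⟩, ?_⟩
  · rw [hPB, hBdef, hTmul', hTmul', hBm1, Matrix.mul_zero, Matrix.zero_mul]
  · have hQB : (1 : Matrix (Fin n) (Fin n) ℂ) - P = U * (1 - P') * Uᴴ := by
      rw [Matrix.mul_sub, Matrix.sub_mul, Matrix.mul_one, hU2, hPB]
    rw [hQB, hBdef, hTmul', hTmul', hBm2, Matrix.mul_zero, Matrix.zero_mul]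
  · rw [hspec, hBdef, hAB, hTmul', hTmul', ← hDBm, Matrix.mul_sub, Matrix.sub_mul]
  · have hnU : ‖U‖ ≤ 1 := aux_norm_unitary U hU1
    have hnUH : ‖Uᴴ‖ ≤ 1 := by
      apply aux_norm_unitary
      rw [Matrix.conjTranspose_conjTranspose]
      exact hU2
    have h1 : ‖B‖ ≤ ‖Bm‖ := by
      rw [hBdef]
      exact aux_norm_conj_le U Uᴴ Bm hnU hnUH
    have h2 : ‖Bm‖ ≤ ‖A'‖ / (b - a) := by
      rw [hBmdef]
      exact aux_schur d a b hab hdclass A' hA'offd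
    have h3 : ‖A'‖ ≤ ‖A‖ := by
      rw [hA'def]
      exact aux_norm_conj_le Uᴴ U A hnUH hnU
    have hg : (0:ℝ) < b - a := sub_pos.mpr hab
    refine (h1.trans h2).trans ?_
    exact (div_le_div_iff_of_pos_right hg).mpr h3
  · intro B'' hB1 hB2 hB3
    set C : Matrix (Fin n) (Fin n) ℂ := Uᴴ * B'' * U with hCdef
    have hCP : P' * C * P' = 0 := by
      rw [hP'def, hCdef, hTmul, hTmul, hB1, Matrix.mul_zero, Matrix.zero_mul]
    have hCQ : (1 - P') * C * (1 - P') = 0 := by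
      rw [← hQ'T, hCdef, hTmul, hTmul, hB2, Matrix.mul_zero, Matrix.zero_mul]
    have hCD : D * C - C * D = A' := by
      calc D * C - C * D
          = Uᴴ * (h * B'') * U - Uᴴ * (B'' * h) * U := by
            rw [← hDT, hCdef, hTmul, hTmul]
        _ = Uᴴ * (h * B'' - B'' * h) * U := by rw [Matrix.mul_sub, Matrix.sub_mul]
        _ = A' := by rw [hB3, hA'def]
    have hCBm : C = Bm := by
      apply Matrix.ext
      intro i j
      by_cases hde : d i = d j
      · have hcl : (d i ≤ a) ↔ (d j ≤ a) := by rw [hde]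
        rw [hBm_offd i j hcl]
        by_cases hi : d i ≤ a
        · have hj : d j ≤ a := hcl.mp hi
          have e := congrFun (congrFun hCP i) j
          rw [hP'diag, aux_diag_sandwich] at e
          simp only [hi, hj, if_true, one_mul, mul_one] at e
          simpa using e
        · have hj : ¬ d j ≤ a := fun hja => hi (hcl.mpr hja)
          have e := congrFun (congrFun hCQ i) j
          rw [hP'diag, aux_one_sub_diag, aux_diag_sandwich] at e
          simp only [hi, hj, if_false, sub_zero, one_mul, mul_one] at e
          simpa using e
      · have e := congrFun (congrFun hCD i) j
        rw [Matrix.sub_apply, hDdef, Matrix.diagonal_mul, Matrix.mul_diagonal] at e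
        rw [hBm_entry]
        have hne : ((d i : ℂ)) - (d j : ℂ) ≠ 0 := sub_ne_zero.mpr (by exact_mod_cast hde)
        field_simp
        linear_combination e
    calc B'' = U * (Uᴴ * B'' * U) * Uᴴ := (hback B'').symm
      _ = U * C * Uᴴ := by rw [← hCdef]
      _ = U * Bm * Uᴴ := by rw [hCBm]
      _ = B := hBdef.symm
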